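/- For all real r in [0, π], the inequality 2(r² − r·sin r·cos r) ≥ 3(sin² r − r·sin r·cos r) holds. -/

import Mathlib

open Real

lemma mono_aux {f : ℝ → ℝ} {f' : ℝ → ℝ} (hf : ∀ y, HasDerivAt f (f' y) y)
    (hd : ∀ y, 0 < y → 0 ≤ f' y) {x : ℝ} (hx : 0 ≤ x) : f 0 ≤ f x := by
  have hdiff : Differentiable ℝ f := fun y => (hf y).differentiableAt
  have h := monotoneOn_of_deriv_nonneg (convex_Ici (0:ℝ)) hdiff.continuous.continuousOn
    hdiff.differentiableOn ?_
  · exact h (Set.self_mem_Ici) hx hx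
  · intro y hy
    rw [interior_Ici] at hy
    rw [(hf y).deriv]
    exact hd y hy

lemma sin_ge_cubic {x : ℝ} (hx : 0 ≤ x) : x - x ^ 3 / 6 ≤ Real.sin x := by
  have h := mono_aux (f := fun x => Real.sin x - (x - x ^ 3 / 6))
    (f' := fun y => Real.cos y - (1 - y ^ 2 / 2)) ?_ ?_ hx
  · simpa using h
  · intro y
    have : HasDerivAt (fun x : ℝ => x - x ^ 3 / 6) (1 - y ^ 2 / 2) y := by
      have := ((hasDerivAt_pow 3 y).div_const 6)
      have h2 := (hasDerivAt_id y).sub this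
      exact h2.congr_deriv (by simp; ring)
    exact (Real.hasDerivAt_sin y).sub this
  · intro y _
    have := Real.one_sub_sq_div_two_le_cos (x := y)
    simpa using by linarith

lemma cos_le_quartic {x : ℝ} (hx : 0 ≤ x) : Real.cos x ≤ 1 - x ^ 2 / 2 + x ^ 4 / 24 := by
  have h := mono_aux (f := fun x => (1 - x ^ 2 / 2 + x ^ 4 / 24) - Real.cos x)
    (f' := fun y => ((-y + y ^ 3 / 6) + Real.sin y)) ?_ ?_ hx
  · simpa using h
  · intro y
    have h1 : HasDerivAt (fun x : ℝ => 1 - x ^ 2 / 2 + x ^ 4 / 24) (-y + y ^ 3 / 6) y := by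
      have h2 := ((hasDerivAt_pow 2 y).div_const 2)
      have h4 := ((hasDerivAt_pow 4 y).div_const 24)
      have := ((hasDerivAt_const y (1:ℝ)).sub h2).add h4
      exact this.congr_deriv (by simp; ring)
    have := h1.sub (Real.hasDerivAt_cos y)
    exact this.congr_deriv (by ring)
  · intro y hy
    have := sin_ge_cubic hy.le
    linarith

lemma sin_le_quintic {x : ℝ} (hx : 0 ≤ x) :
    Real.sin x ≤ x - x ^ 3 / 6 + x ^ 5 / 120 := by
  have h := mono_aux (f := fun x => (x - x ^ 3 / 6 + x ^ 5 / 120) - Real.sin x)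
    (f' := fun y => (1 - y ^ 2 / 2 + y ^ 4 / 24) - Real.cos y) ?_ ?_ hx
  · simpa using h
  · intro y
    have h1 : HasDerivAt (fun x : ℝ => x - x ^ 3 / 6 + x ^ 5 / 120)
        (1 - y ^ 2 / 2 + y ^ 4 / 24) y := by
      have h3 := ((hasDerivAt_pow 3 y).div_const 6)
      have h5 := ((hasDerivAt_pow 5 y).div_const 120)
      have := ((hasDerivAt_id y).sub h3).add h5
      exact this.congr_deriv (by simp; ring)
    exact h1.sub (Real.hasDerivAt_sin y)
  · intro y hy
    have := cos_le_quartic hy.le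
    linarith

theorem stmt3 :
    ∀ r ∈ Set.Icc (0:ℝ) π,
      2 * (r ^ 2 - r * Real.sin r * Real.cos r) ≥
        3 * (Real.sin r ^ 2 - r * Real.sin r * Real.cos r) := by
  rintro r ⟨hr0, hrpi⟩
  have hs0 : 0 ≤ Real.sin r := Real.sin_nonneg_of_nonneg_of_le_pi hr0 hrpi
  rcases le_or_gt r 1.4 with hcase | hcase
  · have h1 := sin_ge_cubic hr0
    have h2 := sin_le_quintic hr0
    have h3 := Real.one_sub_sq_div_two_le_cos (x := r)
    have h5 : 0 ≤ r - r ^ 3 / 6 := by nlinarith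
    have h6 : 0 ≤ 1 - r ^ 2 / 2 := by nlinarith
    have hsc : (r - r ^ 3 / 6) * (1 - r ^ 2 / 2) ≤ Real.sin r * Real.cos r := by
      nlinarith [mul_le_mul h1 h3 h6 hs0]
    have hrsc : r * ((r - r ^ 3 / 6) * (1 - r ^ 2 / 2)) ≤ r * (Real.sin r * Real.cos r) :=
      mul_le_mul_of_nonneg_left hsc hr0
    have hsq : Real.sin r ^ 2 ≤ (r - r ^ 3 / 6 + r ^ 5 / 120) ^ 2 := by
      nlinarith
    have hpoly : 0 ≤ 2 * r ^ 2 + r * ((r - r ^ 3 / 6) * (1 - r ^ 2 / 2))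
        - 3 * (r - r ^ 3 / 6 + r ^ 5 / 120) ^ 2 := by
      have e1 : 0 ≤ r ^ 4 * (1 / 3 - r ^ 2 / 20) := by
        apply mul_nonneg (by positivity)
        nlinarith
      have e2 : 0 ≤ r ^ 8 * (1 / 120 - r ^ 2 / 4800) := by
        apply mul_nonneg (by positivity)
        nlinarith
      nlinarith [e1, e2]
    nlinarith [hrsc, hsq, hpoly]
  · have h1 : -1 ≤ Real.sin (2 * r) := Real.neg_one_le_sin _
    have h2 : Real.sin (2 * r) = 2 * Real.sin r * Real.cos r := Real.sin_two_mul r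
    have h3 : Real.sin r ^ 2 ≤ 1 := Real.sin_sq_le_one r
    nlinarith [sq_nonneg (r - 1.4)]
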